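/- Let p be a probability vector on [d2] and q a probability vector on [d0], and let A be a random d2×d0 indicator matrix equal to e_i e_kᵀ with probability p(i)q(k). Then for any U = [u_1,…,u_{d1}] ∈ ℝ^{d2×d1} and V = [v_1,…,v_{d1}] ∈ ℝ^{d0×d1}, one has Σ_{w=1}^{d1} E[(u_wᵀ A v_w)²] = Σ_{w=1}^{d1} ‖diag(√p) u_w‖²·‖diag(√q) v_w‖², and this quantity is at least (1/d1)·‖diag(√p) U Vᵀ diag(√q)‖_*². -/

import Mathlib

open Matrix

/-- Nuclear norm (sum of singular values) of a real matrix: the sum of the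
square roots of the eigenvalues of `Mᵀ M`. -/
noncomputable def nuclearNorm {d2 d0 : ℕ} (M : Matrix (Fin d2) (Fin d0) ℝ) : ℝ :=
  ∑ i, Real.sqrt ((Matrix.isHermitian_conjTranspose_mul_self M).eigenvalues i)

/-- `u_wᵀ A v_w` where `u_w`, `v_w` are the `w`-th columns of `U`, `V`. -/
noncomputable def quadForm {d0 d1 d2 : ℕ} (U : Matrix (Fin d2) (Fin d1) ℝ)
    (V : Matrix (Fin d0) (Fin d1) ℝ) (w : Fin d1) (A : Matrix (Fin d2) (Fin d0) ℝ) : ℝ :=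
  (fun a => U a w) ⬝ᵥ A.mulVec (fun b => V b w)

lemma sum_smul_dotProduct' {m n : ℕ} (c : Fin n → ℝ) (u : Fin n → Fin m → ℝ)
    (v : Fin m → ℝ) : (∑ i, c i • u i) ⬝ᵥ v = ∑ i, c i * (u i ⬝ᵥ v) := by
  simp only [dotProduct, Finset.sum_apply, Pi.smul_apply, smul_eq_mul, Finset.sum_mul,
    Finset.mul_sum, mul_assoc]
  exact Finset.sum_comm

lemma bessel' {m n : ℕ} (u : Fin n → Fin m → ℝ)
    (horth : ∀ i j, i ≠ j → u i ⬝ᵥ u j = 0) (hnorm : ∀ i, u i ⬝ᵥ u i ≤ 1)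
    (a : Fin m → ℝ) : ∑ i, (u i ⬝ᵥ a) ^ 2 ≤ a ⬝ᵥ a := by
  set c : Fin n → ℝ := fun i => u i ⬝ᵥ a with hc
  set S : Fin m → ℝ := ∑ i, c i • u i with hS
  have key : (0:ℝ) ≤ (a - S) ⬝ᵥ (a - S) :=
    Finset.sum_nonneg fun j _ => mul_self_nonneg _
  have e2 : S ⬝ᵥ a = ∑ i, c i ^ 2 := by
    rw [hS, sum_smul_dotProduct']
    exact Finset.sum_congr rfl fun i _ => by rw [hc]; ring
  have e1 : a ⬝ᵥ S = ∑ i, c i ^ 2 := by rw [dotProduct_comm]; exact e2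
  have e3 : S ⬝ᵥ S = ∑ i, c i ^ 2 * (u i ⬝ᵥ u i) := by
    rw [hS, sum_smul_dotProduct']
    refine Finset.sum_congr rfl fun i _ => ?_
    rw [dotProduct_comm (u i), sum_smul_dotProduct', Finset.sum_eq_single i]
    · ring
    · intro j _ hj; rw [horth j i hj]; ring
    · simp
  rw [sub_dotProduct, dotProduct_sub, dotProduct_sub, e1, e2, e3] at key
  have hle : ∑ i, c i ^ 2 * (u i ⬝ᵥ u i) ≤ ∑ i, c i ^ 2 :=
    Finset.sum_le_sum fun i _ => by nlinarith [sq_nonneg (c i), hnorm i]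
  have : ∑ i, c i ^ 2 = ∑ i, (u i ⬝ᵥ a) ^ 2 := rfl
  linarith

lemma nuclear_le' {d0 d1 d2 : ℕ} (M : Matrix (Fin d2) (Fin d0) ℝ)
    (a : Fin d1 → Fin d2 → ℝ) (b : Fin d1 → Fin d0 → ℝ)
    (hM : ∀ i k, M i k = ∑ t, a t i * b t k) :
    nuclearNorm M ≤ ∑ t, Real.sqrt (a t ⬝ᵥ a t) * Real.sqrt (b t ⬝ᵥ b t) := by
  rw [nuclearNorm]
  have hHerm := Matrix.isHermitian_conjTranspose_mul_self M
  set lam := hHerm.eigenvalues with hlam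
  set w : Fin d0 → Fin d0 → ℝ := fun i => (hHerm.eigenvectorBasis i : EuclideanSpace ℝ (Fin d0)) with hw
  have hwdot : ∀ i j, w i ⬝ᵥ w j = if i = j then 1 else 0 := by
    intro i j
    have := (orthonormal_iff_ite.mp hHerm.eigenvectorBasis.orthonormal) i j
    rw [hw]
    simpa [PiLp.inner_apply, RCLike.inner_apply, conj_trivial, dotProduct, mul_comm] using this
  have heig : ∀ i, (Mᵀ * M) *ᵥ w i = lam i • w i := fun i => hHerm.mulVec_eigenvectorBasis i
  have hsymm : (Mᵀ * M)ᵀ = Mᵀ * M := hHerm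
  have hMw : ∀ i j, (M *ᵥ w i) ⬝ᵥ (M *ᵥ w j) = lam i * (if i = j then 1 else 0) := by
    intro i j
    rw [Matrix.dotProduct_mulVec, Matrix.vecMul_mulVec, ← hsymm, Matrix.vecMul_transpose,
      heig i, smul_dotProduct, hwdot i j, smul_eq_mul]
  have hlam_eq : ∀ i, lam i = (M *ᵥ w i) ⬝ᵥ (M *ᵥ w i) := by
    intro i; rw [hMw i i]; simp
  have hlam_nonneg : ∀ i, 0 ≤ lam i := fun i => by
    rw [hlam_eq i]; exact Finset.sum_nonneg fun j _ => mul_self_nonneg _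
  set u : Fin d0 → Fin d2 → ℝ := fun i => (Real.sqrt (lam i))⁻¹ • (M *ᵥ w i) with hu
  have hudot : ∀ i j, u i ⬝ᵥ u j
      = (Real.sqrt (lam i))⁻¹ * ((Real.sqrt (lam j))⁻¹ * (lam i * if i = j then 1 else 0)) := by
    intro i j
    rw [hu]
    simp only [smul_dotProduct, dotProduct_smul, smul_eq_mul, hMw i j]
    ring
  have horth : ∀ i j, i ≠ j → u i ⬝ᵥ u j = 0 := by
    intro i j hij; rw [hudot i j, if_neg hij]; ring
  have hnorm : ∀ i, u i ⬝ᵥ u i ≤ 1 := by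
    intro i
    rw [hudot i i, if_pos rfl, mul_one]
    rcases eq_or_lt_of_le (hlam_nonneg i) with h | h
    · rw [← h]; simp
    · have hs : Real.sqrt (lam i) > 0 := Real.sqrt_pos.mpr h
      have h2 := Real.mul_self_sqrt (hlam_nonneg i)
      have : (Real.sqrt (lam i))⁻¹ * ((Real.sqrt (lam i))⁻¹ * lam i) = 1 := by
        field_simp
        rw [Real.sq_sqrt (hlam_nonneg i)]
      linarith [this]
  have hkey : ∀ i, Real.sqrt (lam i) = u i ⬝ᵥ (M *ᵥ w i) := by
    intro i
    rw [hu]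
    simp only [smul_dotProduct, smul_eq_mul, ← hMw i i, if_pos rfl]
    rw [hMw i i, if_pos rfl, mul_one]
    rcases eq_or_lt_of_le (hlam_nonneg i) with h | h
    · rw [← h]; simp
    · have hs : Real.sqrt (lam i) > 0 := Real.sqrt_pos.mpr h
      have h2 := Real.mul_self_sqrt (hlam_nonneg i)
      field_simp
      rw [Real.sq_sqrt (hlam_nonneg i)]
  have hexp : ∀ (y : Fin d2 → ℝ) (x : Fin d0 → ℝ),
      y ⬝ᵥ (M *ᵥ x) = ∑ t, (a t ⬝ᵥ y) * (b t ⬝ᵥ x) := by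
    intro y x
    have step1 : ∀ j, (M *ᵥ x) j = ∑ t, a t j * (b t ⬝ᵥ x) := by
      intro j
      simp only [Matrix.mulVec, dotProduct, hM, Finset.sum_mul]
      rw [Finset.sum_comm]
      refine Finset.sum_congr rfl fun t _ => ?_
      rw [Finset.mul_sum]
      exact Finset.sum_congr rfl fun k _ => by ring
    calc y ⬝ᵥ (M *ᵥ x) = ∑ j, y j * ∑ t, a t j * (b t ⬝ᵥ x) :=
          Finset.sum_congr rfl fun j _ => by rw [step1]
      _ = ∑ j, ∑ t, y j * (a t j * (b t ⬝ᵥ x)) := by simp only [Finset.mul_sum]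
      _ = ∑ t, ∑ j, y j * (a t j * (b t ⬝ᵥ x)) := Finset.sum_comm
      _ = ∑ t, (a t ⬝ᵥ y) * (b t ⬝ᵥ x) := by
          refine Finset.sum_congr rfl fun t _ => ?_
          rw [show a t ⬝ᵥ y = ∑ j, a t j * y j from rfl, Finset.sum_mul]
          exact Finset.sum_congr rfl fun j _ => by ring
  calc ∑ i, Real.sqrt (lam i) = ∑ i, ∑ t, (a t ⬝ᵥ u i) * (b t ⬝ᵥ w i) := by
        refine Finset.sum_congr rfl fun i _ => ?_
        rw [hkey i, hexp]
    _ = ∑ t, ∑ i, (a t ⬝ᵥ u i) * (b t ⬝ᵥ w i) := Finset.sum_comm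
    _ ≤ ∑ t, Real.sqrt (a t ⬝ᵥ a t) * Real.sqrt (b t ⬝ᵥ b t) := by
        refine Finset.sum_le_sum fun t _ => ?_
        calc ∑ i, (a t ⬝ᵥ u i) * (b t ⬝ᵥ w i)
            ≤ Real.sqrt (∑ i, (a t ⬝ᵥ u i) ^ 2) * Real.sqrt (∑ i, (b t ⬝ᵥ w i) ^ 2) :=
              Real.sum_mul_le_sqrt_mul_sqrt _ _ _
          _ ≤ Real.sqrt (a t ⬝ᵥ a t) * Real.sqrt (b t ⬝ᵥ b t) := by
              refine mul_le_mul ?_ ?_ (Real.sqrt_nonneg _) (Real.sqrt_nonneg _)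
              · apply Real.sqrt_le_sqrt
                have hB := bessel' u horth hnorm (a t)
                calc ∑ i, (a t ⬝ᵥ u i) ^ 2 = ∑ i, (u i ⬝ᵥ a t) ^ 2 := by
                      refine Finset.sum_congr rfl fun i _ => ?_
                      rw [dotProduct_comm]
                  _ ≤ a t ⬝ᵥ a t := hB
              · apply Real.sqrt_le_sqrt
                have horthw : ∀ i j, i ≠ j → w i ⬝ᵥ w j = 0 := fun i j hij => by
                  rw [hwdot i j, if_neg hij]
                have hnormw : ∀ i, w i ⬝ᵥ w i ≤ 1 := fun i => by rw [hwdot i i]; simp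
                have hB := bessel' w horthw hnormw (b t)
                calc ∑ i, (b t ⬝ᵥ w i) ^ 2 = ∑ i, (w i ⬝ᵥ b t) ^ 2 := by
                      refine Finset.sum_congr rfl fun i _ => ?_
                      rw [dotProduct_comm]
                  _ ≤ b t ⬝ᵥ b t := hB

/-- For the random indicator matrix `A = e_i e_kᵀ` with probability `p(i) q(k)`,
`Σ_w E[(u_wᵀ A v_w)²] = Σ_w ‖diag(√p) u_w‖² ‖diag(√q) v_w‖²`, and this is at
least `(1/d1) ‖diag(√p) U Vᵀ diag(√q)‖_*²`. -/
theorem expected_regularizer_eq_and_lower_bound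
    {d0 d1 d2 : ℕ}
    (p : Fin d2 → ℝ) (hp : ∀ i, 0 ≤ p i) (hp1 : ∑ i, p i = 1)
    (q : Fin d0 → ℝ) (hq : ∀ k, 0 ≤ q k) (hq1 : ∑ k, q k = 1)
    (U : Matrix (Fin d2) (Fin d1) ℝ) (V : Matrix (Fin d0) (Fin d1) ℝ) :
    (∑ w : Fin d1, ∑ i : Fin d2, ∑ k : Fin d0,
        p i * q k * (quadForm U V w (Matrix.single i k (1 : ℝ))) ^ 2
      = ∑ w : Fin d1,
          (∑ i : Fin d2, (Real.sqrt (p i) * U i w) ^ 2) *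
          (∑ k : Fin d0, (Real.sqrt (q k) * V k w) ^ 2))
    ∧ (1 / d1 : ℝ) *
        (nuclearNorm (Matrix.diagonal (fun i => Real.sqrt (p i)) * (U * Vᵀ) *
          Matrix.diagonal (fun k => Real.sqrt (q k)))) ^ 2
      ≤ ∑ w : Fin d1, ∑ i : Fin d2, ∑ k : Fin d0,
          p i * q k * (quadForm U V w (Matrix.single i k (1 : ℝ))) ^ 2 := by
  -- evaluation of the quadratic form on an indicator matrix
  have hquad : ∀ (w : Fin d1) (i : Fin d2) (k : Fin d0),
      quadForm U V w (Matrix.single i k (1 : ℝ)) = U i w * V k w := by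
    intro w i k
    rw [quadForm]
    simp [Matrix.mulVec, dotProduct, Matrix.single, ite_and, ite_mul, mul_ite,
      Finset.sum_ite_eq, Finset.sum_ite_eq']
  -- part 1
  have part1 : ∑ w : Fin d1, ∑ i : Fin d2, ∑ k : Fin d0,
        p i * q k * (quadForm U V w (Matrix.single i k (1 : ℝ))) ^ 2
      = ∑ w : Fin d1,
          (∑ i : Fin d2, (Real.sqrt (p i) * U i w) ^ 2) *
          (∑ k : Fin d0, (Real.sqrt (q k) * V k w) ^ 2) := by
    refine Finset.sum_congr rfl fun w _ => ?_
    rw [Finset.sum_mul_sum]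
    refine Finset.sum_congr rfl fun i _ => Finset.sum_congr rfl fun k _ => ?_
    simp only [hquad, mul_pow]
    rw [Real.sq_sqrt (hp i), Real.sq_sqrt (hq k)]
    ring
  refine ⟨part1, ?_⟩
  rw [part1]
  -- part 2
  set a : Fin d1 → Fin d2 → ℝ := fun t i => Real.sqrt (p i) * U i t with ha
  set b : Fin d1 → Fin d0 → ℝ := fun t k => Real.sqrt (q k) * V k t with hb
  set M := Matrix.diagonal (fun i => Real.sqrt (p i)) * (U * Vᵀ) *
      Matrix.diagonal (fun k => Real.sqrt (q k)) with hMdef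
  have hM : ∀ i k, M i k = ∑ t, a t i * b t k := by
    intro i k
    rw [hMdef, Matrix.mul_apply]
    rw [Finset.sum_eq_single k]
    · rw [Matrix.diagonal_mul, Matrix.diagonal_apply_eq, Matrix.mul_apply, Finset.mul_sum,
        Finset.sum_mul]
      refine Finset.sum_congr rfl fun t _ => ?_
      rw [ha, hb]
      simp [Matrix.transpose_apply]
      ring
    · intro j _ hj
      rw [Matrix.diagonal_apply_ne _ hj, mul_zero]
    · simp
  have haa : ∀ t, a t ⬝ᵥ a t = ∑ i, (Real.sqrt (p i) * U i t) ^ 2 := by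
    intro t
    refine Finset.sum_congr rfl fun i _ => ?_
    rw [ha, sq]
  have hbb : ∀ t, b t ⬝ᵥ b t = ∑ k, (Real.sqrt (q k) * V k t) ^ 2 := by
    intro t
    refine Finset.sum_congr rfl fun k _ => ?_
    rw [hb, sq]
  have haa0 : ∀ t, 0 ≤ a t ⬝ᵥ a t := fun t =>
    Finset.sum_nonneg fun i _ => mul_self_nonneg _
  have hbb0 : ∀ t, 0 ≤ b t ⬝ᵥ b t := fun t =>
    Finset.sum_nonneg fun k _ => mul_self_nonneg _
  have hnn : nuclearNorm M ≤ ∑ t, Real.sqrt (a t ⬝ᵥ a t) * Real.sqrt (b t ⬝ᵥ b t) :=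
    nuclear_le' M a b hM
  have hnn0 : 0 ≤ nuclearNorm M := Finset.sum_nonneg fun i _ => Real.sqrt_nonneg _
  have hS0 : 0 ≤ ∑ t, Real.sqrt (a t ⬝ᵥ a t) * Real.sqrt (b t ⬝ᵥ b t) :=
    Finset.sum_nonneg fun t _ => mul_nonneg (Real.sqrt_nonneg _) (Real.sqrt_nonneg _)
  have hCS : (∑ t, Real.sqrt (a t ⬝ᵥ a t) * Real.sqrt (b t ⬝ᵥ b t)) ^ 2
      ≤ (d1 : ℝ) * ∑ t, (a t ⬝ᵥ a t) * (b t ⬝ᵥ b t) := by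
    have := Finset.sum_mul_sq_le_sq_mul_sq Finset.univ (fun _ : Fin d1 => (1:ℝ))
      (fun t => Real.sqrt (a t ⬝ᵥ a t) * Real.sqrt (b t ⬝ᵥ b t))
    simp only [one_mul, one_pow] at this
    calc (∑ t, Real.sqrt (a t ⬝ᵥ a t) * Real.sqrt (b t ⬝ᵥ b t)) ^ 2
        ≤ (∑ _t : Fin d1, (1:ℝ)) * ∑ t, (Real.sqrt (a t ⬝ᵥ a t) * Real.sqrt (b t ⬝ᵥ b t)) ^ 2 :=
          this
      _ = (d1 : ℝ) * ∑ t, (a t ⬝ᵥ a t) * (b t ⬝ᵥ b t) := by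
          rw [Finset.sum_const, Finset.card_univ, Fintype.card_fin, nsmul_eq_mul, mul_one]
          congr 1
          refine Finset.sum_congr rfl fun t _ => ?_
          rw [mul_pow, Real.sq_sqrt (haa0 t), Real.sq_sqrt (hbb0 t)]
  have hgoal : (1 / d1 : ℝ) * (nuclearNorm M) ^ 2 ≤ ∑ t, (a t ⬝ᵥ a t) * (b t ⬝ᵥ b t) := by
    rcases Nat.eq_zero_or_pos d1 with h | h
    · subst h
      simp only [Nat.cast_zero, div_zero, zero_mul]
      exact Finset.sum_nonneg fun t _ => mul_nonneg (haa0 t) (hbb0 t)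
    · have hd : (0:ℝ) < (d1 : ℝ) := by exact_mod_cast h
      have h1 : (nuclearNorm M) ^ 2 ≤ (∑ t, Real.sqrt (a t ⬝ᵥ a t) * Real.sqrt (b t ⬝ᵥ b t)) ^ 2 :=
        pow_le_pow_left₀ hnn0 hnn 2
      have h2 : (nuclearNorm M) ^ 2 ≤ (d1 : ℝ) * ∑ t, (a t ⬝ᵥ a t) * (b t ⬝ᵥ b t) :=
        h1.trans hCS
      rw [div_mul_eq_mul_div, one_mul, div_le_iff₀ hd]
      calc (nuclearNorm M) ^ 2 ≤ (d1 : ℝ) * ∑ t, (a t ⬝ᵥ a t) * (b t ⬝ᵥ b t) := h2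
        _ = (∑ t, (a t ⬝ᵥ a t) * (b t ⬝ᵥ b t)) * (d1 : ℝ) := by ring
  calc (1 / d1 : ℝ) * (nuclearNorm M) ^ 2 ≤ ∑ t, (a t ⬝ᵥ a t) * (b t ⬝ᵥ b t) := hgoal
    _ = ∑ w : Fin d1, (∑ i : Fin d2, (Real.sqrt (p i) * U i w) ^ 2) *
          (∑ k : Fin d0, (Real.sqrt (q k) * V k w) ^ 2) := by
        refine Finset.sum_congr rfl fun t _ => ?_
        rw [haa t, hbb t]
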